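/- (Lower bound for oblivious update under any linear code.) Suppose a stale node stores G·m for a full-row-rank A×B matrix G over F_q with A ≥ 2, knows m, and receives f(m') from an updated node for some function f : F_q^B → R, where m' satisfies d_H(m,m') ≤ 1. If there exists a decoding function D such that D(m, f(m')) = G·m' for all such pairs (m, m'), then |R| ≥ q^2. -/

import Mathlib

open Matrix

lemma aux_two_cols (F : Type*) [Field F] (A B : ℕ) (hA : 2 ≤ A)
    (G : Matrix (Fin A) (Fin B) F) (hG : LinearIndependent F G) :
    ∃ j k : Fin B, j ≠ k ∧ LinearIndependent F ![Gᵀ j, Gᵀ k] := by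
  have hrank : G.rank = A := by rw [hG.rank_matrix, Fintype.card_fin]
  have hspan : Module.finrank F (Submodule.span F (Set.range Gᵀ)) = A := by
    have h := G.rank_eq_finrank_span_cols; rw [hrank] at h; exact h.symm
  by_contra h
  push_neg at h
  have hle : Module.finrank F (Submodule.span F (Set.range Gᵀ)) ≤ 1 := by
    by_cases hz : ∀ j, Gᵀ j = 0
    · have : Set.range Gᵀ ⊆ ({0} : Set (Fin A → F)) := by rintro _ ⟨j, rfl⟩; simp [hz j]
      calc Module.finrank F (Submodule.span F (Set.range Gᵀ))
          ≤ Module.finrank F (Submodule.span F ({0} : Set (Fin A → F))) :=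
            Submodule.finrank_mono (Submodule.span_mono this)
        _ ≤ 1 := by rw [Submodule.span_zero_singleton]; simp
    · push_neg at hz
      obtain ⟨j₀, hj₀⟩ := hz
      have hsub : Set.range Gᵀ ⊆ (Submodule.span F ({Gᵀ j₀} : Set (Fin A → F)) : Set (Fin A → F)) := by
        rintro _ ⟨k, rfl⟩
        have hk : ¬ LinearIndependent F ![Gᵀ k, Gᵀ j₀] := by
          rcases eq_or_ne k j₀ with rfl | hne
          · intro hli
            rw [linearIndependent_fin2] at hli
            exact hli.2 1 (by simp)
          · exact h k j₀ hne
        rw [linearIndependent_fin2] at hk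
        push_neg at hk
        simp only [Matrix.cons_val_one, Matrix.head_cons, Matrix.cons_val_zero] at hk
        obtain ⟨a, ha⟩ := hk hj₀
        rw [← ha]
        exact Submodule.smul_mem _ a (Submodule.mem_span_singleton_self _)
      calc Module.finrank F (Submodule.span F (Set.range Gᵀ))
          ≤ Module.finrank F (Submodule.span F ({Gᵀ j₀} : Set (Fin A → F))) := by
            apply Submodule.finrank_mono
            rw [Submodule.span_le]; exact hsub
        _ = 1 := finrank_span_singleton hj₀
  omega

/-- Lower bound for oblivious update under any linear code: if a decoder can always
recover G·m' from the stale message m and a single downloaded symbol f(m'), then the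
range of f has size at least q^2. -/
theorem stmt3 (F : Type*) [Field F] [Fintype F] [DecidableEq F] (A B : ℕ)
    (hA : 2 ≤ A) (hAB : A ≤ B)
    (G : Matrix (Fin A) (Fin B) F) (hG : LinearIndependent F G)
    (R : Type*) [Fintype R]
    (f : (Fin B → F) → R) (D : (Fin B → F) → R → (Fin A → F))
    (hD : ∀ m m' : Fin B → F, hammingDist m m' ≤ 1 → D m (f m') = G.mulVec m') :
    Fintype.card F ^ 2 ≤ Fintype.card R := by
  obtain ⟨j, k, hjk, hli⟩ := aux_two_cols F A B hA G hG
  -- the message built from a pair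
  set v : F → F → (Fin B → F) := fun a b => Pi.single j a + Pi.single k b with hv
  have hdist : ∀ a b b' : F, hammingDist (v a b) (v a b') ≤ 1 := by
    intro a b b'
    calc hammingDist (v a b) (v a b') ≤ ({k} : Finset (Fin B)).card := by
          apply Finset.card_le_card
          intro i hi
          simp only [hammingDist, Finset.mem_filter] at hi
          simp only [Finset.mem_singleton]
          by_contra hik
          exact hi.2 (by simp [hv, Pi.single_eq_of_ne hik])
      _ = 1 := Finset.card_singleton k
  have hdist' : ∀ a a' b : F, hammingDist (v a b) (v a' b) ≤ 1 := by
    intro a a' b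
    calc hammingDist (v a b) (v a' b) ≤ ({j} : Finset (Fin B)).card := by
          apply Finset.card_le_card
          intro i hi
          simp only [hammingDist, Finset.mem_filter] at hi
          simp only [Finset.mem_singleton]
          by_contra hij
          exact hi.2 (by simp [hv, Pi.single_eq_of_ne hij])
      _ = 1 := Finset.card_singleton j
  have hinj : Function.Injective (fun p : F × F => f (v p.1 p.2)) := by
    rintro ⟨a, b⟩ ⟨a', b'⟩ hf
    simp only at hf
    have h1 := hD (v a b') (v a b) (hammingDist_comm (v a b) (v a b') ▸ hdist a b b')
    have h2 := hD (v a b') (v a' b') (hammingDist_comm (v a' b') (v a b') ▸ hdist' a a' b')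
    rw [hf] at h1
    have hGv : G.mulVec (v a b) = G.mulVec (v a' b') := by rw [← h1, ← h2]
    have hexp : a • Gᵀ j + b • Gᵀ k = a' • Gᵀ j + b' • Gᵀ k := by
      funext i
      have := congrFun hGv i
      simp only [hv, Matrix.mulVec_add, Matrix.mulVec_single, Pi.add_apply] at this
      simpa [transpose_apply, mul_comm] using this
    have hzero : (a - a') • Gᵀ j + (b - b') • Gᵀ k = 0 := by
      have hs := sub_eq_zero.mpr hexp
      rw [sub_smul, sub_smul, ← hs]
      abel
    obtain ⟨h3, h4⟩ := LinearIndependent.pair_iff.mp hli _ _ hzero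
    have : a = a' := by linear_combination h3
    have : b = b' := by linear_combination h4
    simp_all
  calc Fintype.card F ^ 2 = Fintype.card (F × F) := by rw [Fintype.card_prod]; ring
    _ ≤ Fintype.card R := Fintype.card_le_of_injective _ hinj
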